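/- For all real numbers θ₀, x, y, θ with 0 ≤ y ≤ x ≤ 1, 0 ≤ θ₀ ≤ 1 and 0 ≤ θ ≤ 1, the pointwise inequality (w2t(θ) − w2a(θ)) + 2·(w1t(θ) − w1a(θ)) ≥ 0 holds. -/
import Mathlib

/-- Truthful utility of a 2-type attacker of per-item value θ₀ against a 1-type adversary
of value θ. -/
noncomputable def w1t (θ₀ θ : ℝ) : ℝ := if θ ≤ 2 * θ₀ then 2 * θ₀ - θ else 0

/-- Attack utility (bids (1,x),(1,y)) against a 1-type adversary of value θ. -/
noncomputable def w1a (θ₀ y θ : ℝ) : ℝ := if θ ≤ y then 2 * θ₀ - 2 * θ else -y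

/-- Truthful utility against a 2-type adversary of per-item value θ. -/
noncomputable def w2t (θ₀ θ : ℝ) : ℝ := if θ ≤ θ₀ then 2 * θ₀ - 2 * θ else 0

/-- Attack utility (bids (1,x),(1,y)) against a 2-type adversary of per-item value θ. -/
noncomputable def w2a (θ₀ x y θ : ℝ) : ℝ :=
  if θ ≤ y / 2 then 2 * θ₀
  else if θ ≤ x / 2 then 2 * θ₀ - 2 * θ + y
  else if θ ≤ (x + y) / 2 then 2 * θ₀ - 4 * θ + y + x
  else 0

theorem stmt_3 (θ₀ x y θ : ℝ) (hy : 0 ≤ y) (hyx : y ≤ x) (hx : x ≤ 1)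
    (hθ₀ : 0 ≤ θ₀) (hθ₀1 : θ₀ ≤ 1) (hθ0 : 0 ≤ θ) (hθ1 : θ ≤ 1) :
    (w2t θ₀ θ - w2a θ₀ x y θ) + 2 * (w1t θ₀ θ - w1a θ₀ y θ) ≥ 0 := by
  unfold w2t w2a w1t w1a
  split_ifs <;> linarith
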